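/- Let 0 < λ_l < λ_u be reals, let κ = λ_u/λ_l, and let θ ∈ [0, π]. Set η = (1 + cos θ)/(2κ − (κ − 1)(1 + cos θ)). Then the denominator 2κ − (κ − 1)(1 + cos θ) is strictly positive, and the rescaled step size c = (1/λ_l − 1/λ_u)·η + 1/λ_u satisfies 1/c = (λ_l + λ_u − (λ_u − λ_l)·cos θ)/2; equivalently, (λ_l + λ_u)/(λ_u − λ_l) − 2/(c·(λ_u − λ_l)) = cos θ. -/

import Mathlib

open Real

/-- Algebraic core of Proposition 1: with `κ = λ_u/λ_l` and
`η = (1 + cos θ)/(2κ − (κ − 1)(1 + cos θ))`, the denominator is positive and the rescaled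
step size `c = (1/λ_l − 1/λ_u)η + 1/λ_u` has reciprocal equal to the Chebyshev node
`(λ_l + λ_u − (λ_u − λ_l)cos θ)/2`. -/
theorem uba_rescaled_step_is_chebyshev_node
    (lamL lamU θ : ℝ) (h0 : 0 < lamL) (h1 : lamL < lamU)
    (hθ0 : 0 ≤ θ) (hθπ : θ ≤ Real.pi) :
    0 < 2 * (lamU / lamL) - (lamU / lamL - 1) * (1 + Real.cos θ) ∧
    (1 : ℝ) /
        ((1 / lamL - 1 / lamU) *
            ((1 + Real.cos θ) / (2 * (lamU / lamL) - (lamU / lamL - 1) * (1 + Real.cos θ))) +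
          1 / lamU) =
      (lamL + lamU - (lamU - lamL) * Real.cos θ) / 2 ∧
    (lamL + lamU) / (lamU - lamL) -
        2 / (((1 / lamL - 1 / lamU) *
            ((1 + Real.cos θ) / (2 * (lamU / lamL) - (lamU / lamL - 1) * (1 + Real.cos θ))) +
          1 / lamU) * (lamU - lamL)) =
      Real.cos θ := by
  have hc1 : -1 ≤ Real.cos θ := Real.neg_one_le_cos θ
  have hc2 : Real.cos θ ≤ 1 := Real.cos_le_one θ
  set c := Real.cos θ with hc
  have hL : lamL ≠ 0 := ne_of_gt h0
  have hU0 : 0 < lamU := lt_trans h0 h1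
  have hU : lamU ≠ 0 := ne_of_gt hU0
  have hDeq : 2 * (lamU / lamL) - (lamU / lamL - 1) * (1 + c)
      = (2 * lamU - (lamU - lamL) * (1 + c)) / lamL := by
    field_simp
  have hNpos : 0 < 2 * lamU - (lamU - lamL) * (1 + c) := by nlinarith
  have hD : 0 < 2 * (lamU / lamL) - (lamU / lamL - 1) * (1 + c) := by
    rw [hDeq]; positivity
  have hDne := ne_of_gt hD
  have hnode : 0 < lamL + lamU - (lamU - lamL) * c := by nlinarith
  have hstep : (1 / lamL - 1 / lamU) *
        ((1 + c) / (2 * (lamU / lamL) - (lamU / lamL - 1) * (1 + c))) + 1 / lamU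
      = 2 / (lamL + lamU - (lamU - lamL) * c) := by
    have hEq : 2 * lamU - (lamU - lamL) * (1 + c) = lamL + lamU - (lamU - lamL) * c := by ring
    rw [hDeq, hEq]
    have hnne := ne_of_gt hnode
    field_simp
    ring
  refine ⟨hD, ?_, ?_⟩
  · rw [hstep, one_div_div]
  · rw [hstep]
    have h2 : lamU - lamL ≠ 0 := by linarith
    field_simp
    ring
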